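/- Let E be a real inner product space (e.g. EuclideanSpace ℝ (Fin n)), let a, b, q ∈ E with q ∈ openSegment ℝ a b, and let f : ℝ → E be continuous on [0,1] with f 0 = a, f 1 = b, and f t ≠ q for all t ∈ [0,1]. Then eVariationOn f (Set.Icc 0 1) > ENNReal.ofReal (dist a b). -/

import Mathlib

/-- If `q` lies strictly between `a` and `b` in a real inner product space, then any path
from `a` to `b` avoiding `q` has length strictly greater than `dist a b`. -/
theorem length_gt_dist_of_avoids_point_in_openSegment
    {E : Type*} [NormedAddCommGroup E] [InnerProductSpace ℝ E]
    (a b q : E) (hq : q ∈ openSegment ℝ a b)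
    (f : ℝ → E) (hf : ContinuousOn f (Set.Icc 0 1))
    (h0 : f 0 = a) (h1 : f 1 = b)
    (hne : ∀ t ∈ Set.Icc (0 : ℝ) 1, f t ≠ q) :
    ENNReal.ofReal (dist a b) < eVariationOn f (Set.Icc 0 1) := by
  obtain ⟨u, v, hu, hv, huv, hqe⟩ := hq
  have hu1 : u = 1 - v := by linarith
  have hab : a ≠ b := by
    rintro rfl
    apply hne 0 (by norm_num : (0:ℝ) ∈ Set.Icc (0:ℝ) 1)
    rw [h0, ← hqe, hu1]
    module
  have hba : b - a ≠ 0 := sub_ne_zero.mpr (Ne.symm hab)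
  have hpos : (0:ℝ) < ‖b - a‖ ^ 2 := pow_pos (norm_pos_iff.mpr hba) 2
  set g : ℝ → ℝ := fun t => inner ℝ (f t - a) (b - a) with hg_def
  have hg : ContinuousOn g (Set.Icc 0 1) :=
    (hf.sub continuousOn_const).inner continuousOn_const
  have hg0 : g 0 = 0 := by simp [hg_def, h0]
  have hg1 : g 1 = ‖b - a‖ ^ 2 := by
    simp [hg_def, h1, real_inner_self_eq_norm_sq]
  have hmem : v * ‖b - a‖ ^ 2 ∈ Set.Icc (g 0) (g 1) := by
    rw [hg0, hg1]
    constructor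
    · positivity
    · nlinarith
  obtain ⟨t, ht, hgt⟩ := intermediate_value_Icc (by norm_num : (0:ℝ) ≤ 1) hg hmem
  -- f t is not on the segment [a, b]
  have hts : f t ∉ segment ℝ a b := by
    rintro ⟨u', v', hu', hv', huv', hft⟩
    have hu'1 : u' = 1 - v' := by linarith
    have hsub : f t - a = v' • (b - a) := by
      rw [← hft, hu'1]; module
    have hgtv' : g t = v' * ‖b - a‖ ^ 2 := by
      rw [hg_def]; simp only [hsub, real_inner_smul_left, real_inner_self_eq_norm_sq]
    have hv'v : v' = v := by
      have := hgtv'.symm.trans hgt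
      exact mul_right_cancel₀ (ne_of_gt hpos) this
    apply hne t ht
    rw [← hqe, ← hft, hu'1, hv'v, hu1]
  have hlt : dist a b < dist a (f t) + dist (f t) b := by
    refine lt_of_le_of_ne (dist_triangle a (f t) b) ?_
    intro h
    exact hts (mem_segment_iff_wbtw.mpr (dist_add_dist_eq_iff.mp h.symm))
  have e1 : edist (f 0) (f t) ≤ eVariationOn f (Set.Icc 0 t) :=
    eVariationOn.edist_le f ⟨le_refl 0, ht.1⟩ ⟨ht.1, le_refl t⟩
  have e2 : edist (f t) (f 1) ≤ eVariationOn f (Set.Icc t 1) :=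
    eVariationOn.edist_le f ⟨le_refl t, ht.2⟩ ⟨ht.2, le_refl 1⟩
  have hsplit : eVariationOn f (Set.Icc 0 t) + eVariationOn f (Set.Icc t 1)
      = eVariationOn f (Set.Icc 0 1) := by
    have := eVariationOn.Icc_add_Icc f (s := Set.univ) ht.1 ht.2 (Set.mem_univ t)
    simpa using this
  calc ENNReal.ofReal (dist a b)
      < edist (f 0) (f t) + edist (f t) (f 1) := by
        rw [h0, h1, edist_dist, edist_dist,
          ← ENNReal.ofReal_add dist_nonneg dist_nonneg]
        exact (ENNReal.ofReal_lt_ofReal_iff_of_nonneg dist_nonneg).mpr hlt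
    _ ≤ eVariationOn f (Set.Icc 0 t) + eVariationOn f (Set.Icc t 1) := add_le_add e1 e2
    _ = eVariationOn f (Set.Icc 0 1) := hsplit
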